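/- Let f : [0,∞) → ℝ be a strictly convex weight function with lim_{t→0+} t·f(0/t) = 0, and let Δ^f be the associated f-divergence. Then for every finite k ≥ 1, Δ^f is not k-generated: there exists a type X and μ₁, μ₂ ∈ PMF(X) such that the k-cut satisfies Δ̄^f{}ᵏ_X(μ₁‖μ₂) < Δ^f_X(μ₁‖μ₂). In particular, one may take X = {0,1,…,k} and any μ₁, μ₂ with full support on X whose likelihood ratios μ₁(i)/μ₂(i) are pairwise distinct. -/

import Mathlib

open scoped ENNReal

/-- The `f`-divergence associated with a weight function `f`. -/
noncomputable def fDiv (f : ℝ → ℝ) (X : Type) (μ₁ μ₂ : PMF X) : ℝ :=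
  ∑' x, (μ₂ x).toReal * f ((μ₁ x).toReal / (μ₂ x).toReal)

lemma fDiv_fintype {X : Type} [Fintype X] (f : ℝ → ℝ) (μ₁ μ₂ : PMF X) :
    fDiv f X μ₁ μ₂ = ∑ x, (μ₂ x).toReal * f ((μ₁ x).toReal / (μ₂ x).toReal) :=
  tsum_fintype _

lemma bind_toReal {n m : ℕ} (μ : PMF (Fin n)) (γ : Fin n → PMF (Fin m)) (j : Fin m) :
    ((μ.bind γ) j).toReal = ∑ i, (μ i).toReal * ((γ i) j).toReal := by
  rw [PMF.bind_apply, tsum_fintype, ENNReal.toReal_sum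
    (fun i _ => ENNReal.mul_ne_top (μ.apply_ne_top i) ((γ i).apply_ne_top j))]
  simp [ENNReal.toReal_mul]

lemma sum_toReal_eq_one {n : ℕ} (μ : PMF (Fin n)) : ∑ i, (μ i).toReal = 1 := by
  rw [← ENNReal.toReal_sum (fun i _ => μ.apply_ne_top i), ← tsum_fintype (L := .unconditional _), μ.tsum_coe,
    ENNReal.toReal_one]

lemma jensen_gap {n : ℕ} {f : ℝ → ℝ} (hf : ConvexOn ℝ (Set.Ici 0) f)
    (w x : Fin n → ℝ) (hw : ∀ i, 0 ≤ w i) (hw1 : ∑ i, w i = 1)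
    (hx : ∀ i, 0 ≤ x i) {i₀ i₁ : Fin n} (hne : i₀ ≠ i₁)
    {c : ℝ} (hc : 0 ≤ c) (h0 : c ≤ w i₀) (h1 : c ≤ w i₁) :
    f (∑ i, w i * x i) + c * (f (x i₀) + f (x i₁) - 2 * f ((x i₀ + x i₁)/2))
      ≤ ∑ i, w i * f (x i) := by
  set m : ℝ := (x i₀ + x i₁)/2 with hm
  set w' : Option (Fin n) → ℝ := fun o => o.elim (2*c)
    (fun i => w i - (if i = i₀ then c else 0) - (if i = i₁ then c else 0)) with hw'
  set x' : Option (Fin n) → ℝ := fun o => o.elim m x with hx'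
  have hsum_ite : ∀ (g : Fin n → ℝ),
      ∑ i, (w i - (if i = i₀ then c else 0) - (if i = i₁ then c else 0)) * g i
        = ∑ i, w i * g i - c * g i₀ - c * g i₁ := by
    intro g
    rw [Finset.sum_congr rfl (g := fun i =>
      w i * g i - (if i = i₀ then c * g i else 0) - (if i = i₁ then c * g i else 0))
      (by intro i _; simp only [sub_mul, ite_mul, zero_mul])]
    rw [Finset.sum_sub_distrib, Finset.sum_sub_distrib, Finset.sum_ite_eq' Finset.univ i₀,
      Finset.sum_ite_eq' Finset.univ i₁]
    simp
  have hw'0 : ∀ o ∈ Finset.univ, 0 ≤ w' o := by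
    rintro (_ | i) _
    · simp only [hw', Option.elim]; positivity
    · simp only [hw', Option.elim]
      by_cases e0 : i = i₀ <;> by_cases e1 : i = i₁ <;>
        simp_all [sub_nonneg] <;> linarith [hw i]
  have hw'1 : ∑ o, w' o = 1 := by
    rw [Fintype.sum_option]
    have := hsum_ite (fun _ => 1)
    simp only [mul_one] at this
    simp only [hw', Option.elim]
    rw [this]; linarith [hw1]
  have hmem : ∀ o ∈ Finset.univ, x' o ∈ Set.Ici (0:ℝ) := by
    rintro (_ | i) _
    · simp only [hx', Option.elim, Set.mem_Ici, hm]
      have := hx i₀; have := hx i₁; linarith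
    · exact hx i
  have key := hf.map_sum_le hw'0 hw'1 hmem
  simp only [smul_eq_mul] at key
  rw [Fintype.sum_option, Fintype.sum_option] at key
  simp only [hw', hx', Option.elim] at key
  rw [hsum_ite x, hsum_ite (fun i => f (x i))] at key
  have hmean : 2 * c * m + (∑ i, w i * x i - c * x i₀ - c * x i₁) = ∑ i, w i * x i := by
    rw [hm]; ring
  rw [hmean] at key
  linarith

lemma key_lt (f : ℝ → ℝ) (hconv : StrictConvexOn ℝ (Set.Ici (0:ℝ)) f)
    (k : ℕ) (hk : 1 ≤ k) (μ₁ μ₂ : PMF (Fin (k + 1)))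
    (h1 : ∀ i, μ₁ i ≠ 0) (h2 : ∀ i, μ₂ i ≠ 0)
    (hr : ∀ i j, i ≠ j →
      (μ₁ i).toReal / (μ₂ i).toReal ≠ (μ₁ j).toReal / (μ₂ j).toReal) :
    (⨆ γ : Fin (k + 1) → PMF (Fin k), fDiv f (Fin k) (μ₁.bind γ) (μ₂.bind γ)) <
      fDiv f (Fin (k + 1)) μ₁ μ₂ := by
  haveI : NeZero k := ⟨by omega⟩
  haveI : Nonempty (Fin k) := ⟨⟨0, hk⟩⟩
  haveI : Nonempty (Fin (k+1) → PMF (Fin k)) := ⟨fun _ => PMF.pure ⟨0, hk⟩⟩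
  set p : Fin (k+1) → ℝ := fun i => (μ₁ i).toReal with hpdef
  set q : Fin (k+1) → ℝ := fun i => (μ₂ i).toReal with hqdef
  set r : Fin (k+1) → ℝ := fun i => p i / q i with hrdef
  have hq : ∀ i, 0 < q i := fun i => ENNReal.toReal_pos (h2 i) (μ₂.apply_ne_top i)
  have hp : ∀ i, 0 < p i := fun i => ENNReal.toReal_pos (h1 i) (μ₁.apply_ne_top i)
  have hrpos : ∀ i, 0 < r i := fun i => div_pos (hp i) (hq i)
  have hpr : ∀ i, p i = q i * r i := fun i => (mul_div_cancel₀ (p i) (hq i).ne').symm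
  have hΔ : fDiv f (Fin (k+1)) μ₁ μ₂ = ∑ i, q i * f (r i) := fDiv_fintype f μ₁ μ₂
  have hkR : (0:ℝ) < k := by exact_mod_cast hk
  -- minimum of q
  have hU : (Finset.univ : Finset (Fin (k+1))).Nonempty := Finset.univ_nonempty
  set qmin := Finset.univ.inf' hU q with hqmindef
  have hqmin : 0 < qmin := (Finset.lt_inf'_iff hU).2 (fun i _ => hq i)
  set c := qmin / k with hcdef
  have hc : 0 < c := div_pos hqmin hkR
  -- minimum Jensen defect over pairs
  set s : Finset (Fin (k+1) × Fin (k+1)) := Finset.univ.filter (fun a => a.1 ≠ a.2)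
    with hsdef
  have hsne : s.Nonempty := by
    refine ⟨(⟨0, by omega⟩, ⟨1, by omega⟩), ?_⟩
    simp [hsdef, Fin.ext_iff]
  set D := s.inf' hsne (fun a => f (r a.1) + f (r a.2) - 2 * f ((r a.1 + r a.2)/2))
    with hDdef
  have hD : 0 < D := by
    rw [hDdef, Finset.lt_inf'_iff]
    intro a ha
    have hane : a.1 ≠ a.2 := by simpa [hsdef] using ha
    have hrne : r a.1 ≠ r a.2 := hr a.1 a.2 hane
    have := hconv.2 (Set.mem_Ici.2 (hrpos a.1).le) (Set.mem_Ici.2 (hrpos a.2).le) hrne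
      (by norm_num : (0:ℝ) < 1/2) (by norm_num : (0:ℝ) < 1/2) (by norm_num)
    simp only [smul_eq_mul] at this
    have heq : (1/2 : ℝ) * r a.1 + (1/2 : ℝ) * r a.2 = (r a.1 + r a.2)/2 := by ring
    rw [heq] at this
    linarith
  set ε := c * D with hεdef
  have hε : 0 < ε := mul_pos hc hD
  have hbound : ∀ γ : Fin (k+1) → PMF (Fin k),
      fDiv f (Fin k) (μ₁.bind γ) (μ₂.bind γ) ≤ fDiv f (Fin (k+1)) μ₁ μ₂ - ε := by
    intro γ
    set g : Fin (k+1) → Fin k → ℝ := fun i j => ((γ i) j).toReal with hgdef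
    have hg0 : ∀ i j, 0 ≤ g i j := fun i j => ENNReal.toReal_nonneg
    have hgsum : ∀ i, ∑ j, g i j = 1 := fun i => sum_toReal_eq_one (γ i)
    set q' : Fin k → ℝ := fun j => ∑ i, q i * g i j with hq'def
    set p' : Fin k → ℝ := fun j => ∑ i, p i * g i j with hp'def
    set S : Fin k → ℝ := fun j => ∑ i, q i * g i j * f (r i) with hSdef
    set T : Fin k → ℝ := fun j => q' j * f (p' j / q' j) with hTdef
    have hΔγ : fDiv f (Fin k) (μ₁.bind γ) (μ₂.bind γ) = ∑ j, T j := by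
      rw [fDiv_fintype]
      refine Finset.sum_congr rfl fun j _ => ?_
      rw [hTdef]
      simp only [bind_toReal μ₁ γ j, bind_toReal μ₂ γ j, hq'def, hp'def, hpdef, hqdef, hgdef]
    -- the key per-output inequality, with gap
    have hkey : ∀ (j : Fin k) (i₀ i₁ : Fin (k+1)), i₀ ≠ i₁ → ∀ c' : ℝ, 0 ≤ c' →
        c' ≤ q i₀ * g i₀ j → c' ≤ q i₁ * g i₁ j →
        T j + c' * (f (r i₀) + f (r i₁) - 2 * f ((r i₀ + r i₁)/2)) ≤ S j := by
      intro j i₀ i₁ hne c' hc' hc0 hc1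
      have hq'nn : 0 ≤ q' j :=
        Finset.sum_nonneg fun i _ => mul_nonneg (hq i).le (hg0 i j)
      rcases eq_or_lt_of_le hq'nn with hqj | hqj
      · -- q' j = 0 : everything vanishes
        have hgz : ∀ i, g i j = 0 := by
          intro i
          have := (Finset.sum_eq_zero_iff_of_nonneg
            (fun i _ => mul_nonneg (hq i).le (hg0 i j))).1 hqj.symm i (Finset.mem_univ i)
          have hqi := (hq i).ne'
          rcases mul_eq_zero.1 this with h | h
          · exact absurd h hqi
          · exact h
        have hc'0 : c' = 0 := le_antisymm (by rw [hgz i₀, mul_zero] at hc0; exact hc0) hc'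
        have hSz : S j = 0 := by
          show (∑ i, q i * g i j * f (r i)) = 0
          exact Finset.sum_eq_zero fun i _ => by rw [hgz i]; ring
        have hTz : T j = 0 := by
          show q' j * f (p' j / q' j) = 0
          rw [← hqj, zero_mul]
        rw [hc'0, hSz, hTz]; norm_num
      · set w : Fin (k+1) → ℝ := fun i => q i * g i j / q' j with hwdef
        have hw0 : ∀ i, 0 ≤ w i := fun i =>
          div_nonneg (mul_nonneg (hq i).le (hg0 i j)) hq'nn
        have hw1 : ∑ i, w i = 1 := by
          show (∑ i, q i * g i j / q' j) = 1
          rw [← Finset.sum_div]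
          have hqq : (∑ i, q i * g i j) = q' j := rfl
          rw [hqq, div_self hqj.ne']
        have hmean : ∑ i, w i * r i = p' j / q' j := by
          show (∑ i, q i * g i j / q' j * r i) = (∑ i, p i * g i j) / q' j
          rw [Finset.sum_div]
          refine Finset.sum_congr rfl fun i _ => ?_
          rw [hpr i]; ring
        have hj := jensen_gap hconv.convexOn w r hw0 hw1 (fun i => (hrpos i).le) hne
          (c := c'/q' j) (div_nonneg hc' hq'nn)
          (show c'/q' j ≤ q i₀ * g i₀ j / q' j from (div_le_div_iff_of_pos_right hqj).2 hc0)
          (show c'/q' j ≤ q i₁ * g i₁ j / q' j from (div_le_div_iff_of_pos_right hqj).2 hc1)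
        rw [hmean] at hj
        have hmul := mul_le_mul_of_nonneg_left hj hq'nn
        have hR : q' j * ∑ i, w i * f (r i) = S j := by
          show q' j * (∑ i, q i * g i j / q' j * f (r i)) = ∑ i, q i * g i j * f (r i)
          rw [Finset.mul_sum]
          refine Finset.sum_congr rfl fun i _ => ?_
          field_simp
        have hcc : q' j * (c' / q' j) = c' := by field_simp
        have hL : q' j * (f (p' j / q' j)
              + c'/q' j * (f (r i₀) + f (r i₁) - 2 * f ((r i₀ + r i₁)/2)))
            = T j + c' * (f (r i₀) + f (r i₁) - 2 * f ((r i₀ + r i₁)/2)) := by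
          have hTj : T j = q' j * f (p' j / q' j) := rfl
          rw [mul_add, ← mul_assoc, hcc, hTj]
        rw [hL, hR] at hmul
        exact hmul
    -- Jensen without gap
    have hST : ∀ j, T j ≤ S j := by
      intro j
      have h01 : (⟨0, by omega⟩ : Fin (k+1)) ≠ ⟨1, by omega⟩ := by simp [Fin.ext_iff]
      have := hkey j ⟨0, by omega⟩ ⟨1, by omega⟩ h01 0 le_rfl
        (mul_nonneg (hq _).le (hg0 _ _)) (mul_nonneg (hq _).le (hg0 _ _))
      simpa using this
    -- pigeonhole
    have hbig : ∀ i : Fin (k+1), ∃ j, 1/(k:ℝ) ≤ g i j := by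
      intro i
      by_contra hcon
      push_neg at hcon
      have hlt : ∑ j, g i j < ∑ _j : Fin k, 1/(k:ℝ) :=
        Finset.sum_lt_sum_of_nonempty Finset.univ_nonempty (fun j _ => hcon j)
      rw [hgsum i, Finset.sum_const, Finset.card_univ, Fintype.card_fin, nsmul_eq_mul,
        mul_one_div, div_self hkR.ne'] at hlt
      exact lt_irrefl 1 hlt
    choose J hJ using hbig
    obtain ⟨i₀, i₁, hne01, hJeq⟩ := Fintype.exists_ne_map_eq_of_card_lt J
      (by simp [Fintype.card_fin])
    have hpair : (i₀, i₁) ∈ s := by rw [hsdef]; simp [hne01]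
    have hDle : D ≤ f (r i₀) + f (r i₁) - 2 * f ((r i₀ + r i₁)/2) :=
      Finset.inf'_le _ hpair
    have hci : ∀ i' : Fin (k+1), c ≤ q i' * g i' (J i') := by
      intro i'
      rw [hcdef]
      calc qmin / (k:ℝ) ≤ q i' * (1/(k:ℝ)) := by
            rw [div_eq_mul_one_div]
            exact mul_le_mul_of_nonneg_right (Finset.inf'_le q (Finset.mem_univ i'))
              (by positivity)
        _ ≤ q i' * g i' (J i') := mul_le_mul_of_nonneg_left (hJ i') (hq i').le
    have hci1 : c ≤ q i₁ * g i₁ (J i₀) := by rw [hJeq]; exact hci i₁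
    have hgap := hkey (J i₀) i₀ i₁ hne01 c hc.le (hci i₀) hci1
    have hTS : T (J i₀) + ε ≤ S (J i₀) := by
      have hmul := mul_le_mul_of_nonneg_left hDle hc.le
      rw [hεdef]; linarith
    have hsingle : ε ≤ ∑ j, (S j - T j) := by
      have h0 : ∀ j ∈ Finset.univ, 0 ≤ S j - T j := fun j _ => sub_nonneg.2 (hST j)
      calc ε ≤ S (J i₀) - T (J i₀) := by linarith
        _ ≤ ∑ j, (S j - T j) := Finset.single_le_sum h0 (Finset.mem_univ _)
    have hsumS : ∑ j, S j = ∑ i, q i * f (r i) := by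
      show (∑ j, ∑ i, q i * g i j * f (r i)) = ∑ i, q i * f (r i)
      rw [Finset.sum_comm]
      refine Finset.sum_congr rfl fun i _ => ?_
      have : ∑ j, q i * g i j * f (r i) = q i * f (r i) * ∑ j, g i j := by
        rw [Finset.mul_sum]
        exact Finset.sum_congr rfl fun j _ => by ring
      rw [this, hgsum i, mul_one]
    have hsub : ∑ j, (S j - T j) = ∑ j, S j - ∑ j, T j := Finset.sum_sub_distrib _ _
    rw [hΔγ, hΔ]
    linarith
  calc (⨆ γ : Fin (k + 1) → PMF (Fin k), fDiv f (Fin k) (μ₁.bind γ) (μ₂.bind γ))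
      ≤ fDiv f (Fin (k+1)) μ₁ μ₂ - ε := ciSup_le hbound
    _ < fDiv f (Fin (k+1)) μ₁ μ₂ := by linarith

/-- If the weight function `f` is strictly convex (and satisfies the usual boundary
condition `lim_{t→0+} t·f(0/t) = 0`), the associated `f`-divergence is not `k`-generated
for any finite `k ≥ 1`: its `k`-cut is strictly smaller somewhere.  In particular this
happens on `X = {0,1,…,k}` for any two full-support distributions with pairwise distinct
likelihood ratios. -/
theorem fDiv_not_kGenerated (f : ℝ → ℝ)
    (hconv : StrictConvexOn ℝ (Set.Ici (0:ℝ)) f)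
    (hlim : Filter.Tendsto (fun t : ℝ => t * f (0 / t))
      (nhdsWithin 0 (Set.Ioi (0:ℝ))) (nhds 0))
    (k : ℕ) (hk : 1 ≤ k) :
    (∃ (X : Type) (μ₁ μ₂ : PMF X),
      (⨆ γ : X → PMF (Fin k), fDiv f (Fin k) (μ₁.bind γ) (μ₂.bind γ)) <
        fDiv f X μ₁ μ₂) ∧
    (∀ μ₁ μ₂ : PMF (Fin (k + 1)),
      (∀ i, μ₁ i ≠ 0) → (∀ i, μ₂ i ≠ 0) →
      (∀ i j, i ≠ j →
        (μ₁ i).toReal / (μ₂ i).toReal ≠ (μ₁ j).toReal / (μ₂ j).toReal) →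
      (⨆ γ : Fin (k + 1) → PMF (Fin k), fDiv f (Fin k) (μ₁.bind γ) (μ₂.bind γ)) <
        fDiv f (Fin (k + 1)) μ₁ μ₂) := by
  constructor
  · haveI : Nonempty (Fin (k+1)) := ⟨0⟩
    set T : ℝ := ∑ i : Fin (k+1), ((i:ℕ)+1 : ℝ) with hT
    have hTpos : 0 < T := by
      rw [hT]
      exact Finset.sum_pos (fun i _ => by positivity) Finset.univ_nonempty
    have hsum1 : ∑ i : Fin (k+1), (((i:ℕ)+1 : ℝ)/T) = 1 := by
      rw [← Finset.sum_div, ← hT, div_self hTpos.ne']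
    set μ₁ : PMF (Fin (k+1)) := PMF.ofFintype (fun i => ENNReal.ofReal (((i:ℕ)+1)/T))
      (by rw [← ENNReal.ofReal_sum_of_nonneg (fun i _ => by positivity), hsum1,
        ENNReal.ofReal_one]) with hμ₁
    set μ₂ : PMF (Fin (k+1)) := PMF.uniformOfFintype (Fin (k+1)) with hμ₂
    have hμ₁app : ∀ i, μ₁ i = ENNReal.ofReal (((i:ℕ)+1)/T) := fun i => by
      rw [hμ₁, PMF.ofFintype_apply]
    have hμ₂app : ∀ i : Fin (k+1), μ₂ i = ((k+1 : ℕ) : ℝ≥0∞)⁻¹ := fun i => by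
      rw [hμ₂, PMF.uniformOfFintype_apply, Fintype.card_fin]
    have h1 : ∀ i, μ₁ i ≠ 0 := by
      intro i
      rw [hμ₁app i, Ne, ENNReal.ofReal_eq_zero, not_le]
      positivity
    have h2 : ∀ i, μ₂ i ≠ 0 := by
      intro i
      rw [hμ₂app i]
      simp
    have hμ₁R : ∀ i, (μ₁ i).toReal = ((i:ℕ)+1)/T := fun i => by
      rw [hμ₁app i, ENNReal.toReal_ofReal (by positivity)]
    have hμ₂R : ∀ i : Fin (k+1), (μ₂ i).toReal = ((k+1 : ℕ) : ℝ)⁻¹ := fun i => by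
      rw [hμ₂app i, ENNReal.toReal_inv, ENNReal.toReal_natCast]
    have hrdist : ∀ i j : Fin (k+1), i ≠ j →
        (μ₁ i).toReal / (μ₂ i).toReal ≠ (μ₁ j).toReal / (μ₂ j).toReal := by
      intro i j hij h
      rw [hμ₁R, hμ₁R, hμ₂R, hμ₂R] at h
      have hk1 : ((k+1:ℕ):ℝ) ≠ 0 := by positivity
      have : ((i:ℕ):ℝ) = ((j:ℕ):ℝ) := by
        field_simp at h
        linarith
      exact hij (Fin.val_injective (by exact_mod_cast this))
    exact ⟨Fin (k+1), μ₁, μ₂, key_lt f hconv k hk μ₁ μ₂ h1 h2 hrdist⟩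
  · intro μ₁ μ₂ h1 h2 hr
    exact key_lt f hconv k hk μ₁ μ₂ h1 h2 hr
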